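/- Let G be the connected strongly interval graph on the vertex set {J_0,…,J_k} ∪ {I_1,…,I_r}, where k ≥ 1, J_0 = [0,0], J_i = [i−1,i] for i = 1,…,k, and I_j = [a_j,b_j] ⊆ [0,k]\{k} with a_j a nonnegative integer for j = 1,…,r. For 0 ≤ i ≤ k−1 let F_i = {J_i, J_{i+1}} ∪ {I_t : i ∈ I_t}. Then the maximal cliques of G are exactly F_0, F_1, …, F_{k−1}; in particular c(G) = k. -/

import Mathlib

/-- `c(G)`: the number of maximal cliques of a graph `G`. -/
noncomputable def numMaximalCliques {V : Type*} (G : SimpleGraph V) : ℕ :=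
  {s : Set V | Maximal (fun t => G.IsClique t) s}.ncard

/-- The interval graph on a set `I` of closed real intervals, encoded as pairs
`(left endpoint, right endpoint)`: two distinct intervals are adjacent iff they intersect. -/
def intervalGraph (I : Set (ℝ × ℝ)) : SimpleGraph I where
  Adj p q := p ≠ q ∧ (Set.Icc p.val.1 p.val.2 ∩ Set.Icc q.val.1 q.val.2).Nonempty
  symm := by
    constructor
    rintro p q ⟨h1, h2⟩
    exact ⟨h1.symm, by rwa [Set.inter_comm]⟩
  loopless := ⟨fun p h => h.1 rfl⟩

/-- The interval `J_i`: `J_0 = [0,0]` and `J_i = [i-1,i]` for `i ≥ 1`. -/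
noncomputable def Jint (i : ℕ) : ℝ × ℝ := if i = 0 then (0, 0) else ((i : ℝ) - 1, (i : ℝ))

/-- The vertex set `{J_0,…,J_k} ∪ {I_1,…,I_r}` of a connected strongly interval graph, where
`I_j = [a j, b j]`. -/
def stronglyIntervalVerts (k r : ℕ) (a : Fin r → ℕ) (b : Fin r → ℝ) : Set (ℝ × ℝ) :=
  (Jint '' {i | i ≤ k}) ∪ (Set.range fun j : Fin r => ((a j : ℝ), b j))

/-- The conditions on the data of a connected strongly interval graph: `k ≥ 1` and each
`I_j = [a j, b j]` is a genuine closed interval, with integer left endpoint `a j`, contained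
in `[0,k] \ {k}`. -/
def StronglyIntervalData (k r : ℕ) (a : Fin r → ℕ) (b : Fin r → ℝ) : Prop :=
  1 ≤ k ∧ ∀ j : Fin r, (a j : ℝ) ≤ b j ∧
    Set.Icc (a j : ℝ) (b j) ⊆ Set.Icc (0 : ℝ) (k : ℝ) \ {(k : ℝ)}

/-- A graph is a strongly interval graph if every connected component of it is isomorphic to
a connected strongly interval graph. -/
def IsStronglyIntervalGraph {V : Type*} (G : SimpleGraph V) : Prop :=
  ∀ c : G.ConnectedComponent, ∃ (k r : ℕ) (a : Fin r → ℕ) (b : Fin r → ℝ),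
    StronglyIntervalData k r a b ∧
    Nonempty ((G.induce c.supp) ≃g intervalGraph (stronglyIntervalVerts k r a b))

/-- The set `F_i = {J_i, J_{i+1}} ∪ {I_t : i ∈ I_t}` of vertices of a connected strongly
interval graph. -/
def Fclique (k r : ℕ) (a : Fin r → ℕ) (b : Fin r → ℝ) (i : ℕ) :
    Set (stronglyIntervalVerts k r a b) :=
  {p | p.val = Jint i ∨ p.val = Jint (i + 1) ∨
    ∃ t : Fin r, p.val = ((a t : ℝ), b t) ∧ (a t : ℝ) ≤ (i : ℝ) ∧ (i : ℝ) ≤ b t}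

section Aux

variable {k r : ℕ} {a : Fin r → ℕ} {b : Fin r → ℝ}

lemma Jint_snd (i : ℕ) : (Jint i).2 = (i : ℝ) := by
  unfold Jint; split <;> simp_all

lemma Jint_fst_succ (i : ℕ) : (Jint (i + 1)).1 = (i : ℝ) := by
  unfold Jint; simp

/-- every vertex has a genuine interval whose left endpoint is a natural `< k`. -/
lemma vert_struct (h : StronglyIntervalData k r a b)
    (p : stronglyIntervalVerts k r a b) :
    ∃ n : ℕ, (n : ℝ) = p.val.1 ∧ n < k ∧ p.val.1 ≤ p.val.2 := by
  obtain ⟨hk, hI⟩ := h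
  obtain ⟨m, hm, hp⟩ | ⟨t, hp⟩ := p.2
  · have hmk : m ≤ k := hm
    rcases Nat.eq_zero_or_pos m with rfl | hm1
    · exact ⟨0, by simp [← hp, Jint], hk, by simp [← hp, Jint]⟩
    · refine ⟨m - 1, ?_, by omega, ?_⟩
      · rw [← hp]; unfold Jint; rw [if_neg (by omega)]
        push_cast [Nat.cast_sub hm1]; ring
      · rw [← hp]; unfold Jint; rw [if_neg (by omega)]; simp
  · have hp' : p.val = ((a t : ℝ), b t) := hp.symm
    obtain ⟨hab, hsub⟩ := hI t
    have hb : b t ∈ Set.Icc (0:ℝ) k \ {(k:ℝ)} := hsub ⟨hab, le_refl _⟩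
    have hbk : b t < k := lt_of_le_of_ne hb.1.2 hb.2
    have hak : (a t : ℝ) < k := lt_of_le_of_lt hab hbk
    refine ⟨a t, by rw [hp'], by exact_mod_cast hak, by rw [hp']; exact hab⟩

/-- if the interval of `p` contains the integer `i`, then `p ∈ F i`. -/
lemma mem_F_of (p : stronglyIntervalVerts k r a b) (i : ℕ)
    (h1 : p.val.1 ≤ (i : ℝ)) (h2 : (i : ℝ) ≤ p.val.2) :
    p ∈ Fclique k r a b i := by
  obtain ⟨m, hm, hp⟩ | ⟨t, hp⟩ := p.2
  · have hmk : m ≤ k := hm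
    rcases Nat.eq_zero_or_pos m with rfl | hm1
    · have : (i : ℝ) ≤ 0 := by rw [← hp] at h2; simpa [Jint] using h2
      have hi0 : i = 0 := by exact_mod_cast le_antisymm this (by positivity)
      left; rw [← hp, hi0]
    · have hpe : p.val = ((m : ℝ) - 1, (m : ℝ)) := by
        rw [← hp]; unfold Jint; rw [if_neg (by omega)]
      rw [hpe] at h1 h2
      simp only at h1 h2
      have hmi : m ≤ i + 1 := by exact_mod_cast (by push_cast; linarith : (m:ℝ) ≤ (i:ℝ) + 1)
      have him : i ≤ m := by exact_mod_cast h2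
      rcases (by omega : i = m ∨ i + 1 = m) with hcase | hcase
      · left; rw [← hp, hcase]
      · right; left; rw [← hp, hcase]
  · have hp' : p.val = ((a t : ℝ), b t) := hp.symm
    right; right
    exact ⟨t, hp', by rw [hp'] at h1; exact h1, by rw [hp'] at h2; exact h2⟩

/-- every member of `F i` has an interval containing `i`. -/
lemma F_contains (h : StronglyIntervalData k r a b) {i : ℕ}
    {p : stronglyIntervalVerts k r a b} (hp : p ∈ Fclique k r a b i) :
    p.val.1 ≤ (i : ℝ) ∧ (i : ℝ) ≤ p.val.2 := by
  rcases hp with hp | hp | ⟨t, hp, h1, h2⟩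
  · rw [hp]; unfold Jint; split
    · subst_vars; simp_all
    · constructor <;> simp_all <;> push_cast <;> linarith
  · rw [hp]; unfold Jint; rw [if_neg (by omega)]
    constructor <;> push_cast <;> linarith
  · rw [hp]; exact ⟨h1, h2⟩

lemma F_isClique (h : StronglyIntervalData k r a b) (i : ℕ) :
    (intervalGraph (stronglyIntervalVerts k r a b)).IsClique (Fclique k r a b i) := by
  intro p hp q hq hne
  change p ≠ q ∧ _
  refine ⟨hne, ⟨(i : ℝ), ?_, ?_⟩⟩
  · exact ⟨(F_contains h hp).1, (F_contains h hp).2⟩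
  · exact ⟨(F_contains h hq).1, (F_contains h hq).2⟩

lemma nonempty_inter_bounds {α β γ δ : ℝ}
    (h : (Set.Icc α β ∩ Set.Icc γ δ).Nonempty) : α ≤ δ ∧ γ ≤ β := by
  obtain ⟨x, ⟨h1, h2⟩, h3, h4⟩ := h
  exact ⟨h1.trans h4, h3.trans h2⟩

/-- the vertex `J i` for `i ≤ k`. -/
noncomputable def vJ (k r : ℕ) (a : Fin r → ℕ) (b : Fin r → ℝ) (i : ℕ) (hi : i ≤ k) :
    stronglyIntervalVerts k r a b :=
  ⟨Jint i, Or.inl ⟨i, hi, rfl⟩⟩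

lemma F_maximal (h : StronglyIntervalData k r a b) {i : ℕ} (hi : i < k) :
    Maximal (fun t => (intervalGraph (stronglyIntervalVerts k r a b)).IsClique t)
      (Fclique k r a b i) := by
  refine ⟨F_isClique h i, fun t ht hsub v hv => ?_⟩
  by_cases hvF : v ∈ Fclique k r a b i
  · exact hvF
  have hne1 : v ≠ vJ k r a b i (le_of_lt hi) := by
    intro he; exact hvF (Or.inl (by rw [he]; rfl))
  have hne2 : v ≠ vJ k r a b (i + 1) hi := by
    intro he; exact hvF (Or.inr (Or.inl (by rw [he]; rfl)))
  have hm1 : vJ k r a b i (le_of_lt hi) ∈ t := hsub (Or.inl rfl)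
  have hm2 : vJ k r a b (i + 1) hi ∈ t := hsub (Or.inr (Or.inl rfl))
  have hadj1 : _ ∧ _ := ht hv hm1 hne1
  have hadj2 : _ ∧ _ := ht hv hm2 hne2
  have h1 := (nonempty_inter_bounds hadj1.2).1
  have h2 := (nonempty_inter_bounds hadj2.2).2
  rw [show (vJ k r a b i (le_of_lt hi)).val = Jint i from rfl, Jint_snd] at h1
  rw [show (vJ k r a b (i+1) hi).val = Jint (i+1) from rfl, Jint_fst_succ] at h2
  exact mem_F_of v i h1 h2

lemma verts_finite (k r : ℕ) (a : Fin r → ℕ) (b : Fin r → ℝ) :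
    (stronglyIntervalVerts k r a b).Finite := by
  apply Set.Finite.union
  · exact Set.Finite.image _ (Set.finite_Iic k)
  · exact Set.finite_range _

lemma maximal_eq_F (h : StronglyIntervalData k r a b)
    {s : Set (stronglyIntervalVerts k r a b)}
    (hs : Maximal (fun t => (intervalGraph (stronglyIntervalVerts k r a b)).IsClique t) s) :
    ∃ i < k, s = Fclique k r a b i := by
  have hVfin := verts_finite k r a b
  haveI : Finite (stronglyIntervalVerts k r a b) := hVfin.to_subtype
  -- s is nonempty
  have hsne : s.Nonempty := by
    by_contra hne
    rw [Set.not_nonempty_iff_eq_empty] at hne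
    have := hs.2 (F_isClique h 0) (by rw [hne]; exact Set.empty_subset _)
    have hmem : vJ k r a b 0 (le_of_lt h.1) ∈ Fclique k r a b 0 := Or.inl rfl
    rw [hne] at this
    exact this hmem
  -- pick element with maximal floor of left endpoint
  obtain ⟨q, hq, hqmax⟩ := Set.Finite.exists_maximalFor
    (fun p => ⌊p.val.1⌋₊) s (Set.toFinite s) hsne
  obtain ⟨nq, hnq, hnqk, hqab⟩ := vert_struct h q
  have hfq : ⌊q.val.1⌋₊ = nq := by rw [← hnq, Nat.floor_natCast]
  refine ⟨nq, hnqk, ?_⟩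
  have hsubF : s ⊆ Fclique k r a b nq := by
    intro p hp
    obtain ⟨np, hnp, hnpk, hpab⟩ := vert_struct h p
    have hfp : ⌊p.val.1⌋₊ = np := by rw [← hnp, Nat.floor_natCast]
    have hple : np ≤ nq := by
      by_contra hlt
      have : ⌊p.val.1⌋₊ ≤ ⌊q.val.1⌋₊ := hqmax (j := p) hp (show ⌊q.val.1⌋₊ ≤ ⌊p.val.1⌋₊ by omega)
      omega
    have h1 : p.val.1 ≤ (nq : ℝ) := by rw [← hnp]; exact_mod_cast hple
    have h2 : (nq : ℝ) ≤ p.val.2 := by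
      by_cases hpq : p = q
      · rw [hpq, hnq]; exact hqab
      · have hadj : _ ∧ _ := hs.1 hp hq hpq
        have := (nonempty_inter_bounds hadj.2).2
        rw [hnq]; exact this
    exact mem_F_of p nq h1 h2
  exact le_antisymm hsubF (hs.2 (F_isClique h nq) hsubF)

lemma F_injOn (h : StronglyIntervalData k r a b) :
    Set.InjOn (Fclique k r a b) {i | i < k} := by
  have key : ∀ i j : ℕ, i < j → j < k → Fclique k r a b i ≠ Fclique k r a b j := by
    intro i j hij hjk hFeq
    have hmem : vJ k r a b i (by omega) ∈ Fclique k r a b i := Or.inl rfl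
    rw [hFeq] at hmem
    rcases hmem with hm | hm | ⟨t, hm, h1, h2⟩
    · have := congrArg Prod.snd hm
      rw [show (vJ k r a b i (by omega : i ≤ k)).val = Jint i from rfl] at this
      rw [Jint_snd, Jint_snd] at this
      exact absurd (by exact_mod_cast this) (by omega)
    · have := congrArg Prod.snd hm
      rw [show (vJ k r a b i (by omega : i ≤ k)).val = Jint i from rfl] at this
      rw [Jint_snd, Jint_snd] at this
      exact absurd (by exact_mod_cast this) (by omega)
    · have hbt : b t = (i : ℝ) := by
        have := congrArg Prod.snd hm
        rw [show (vJ k r a b i (by omega : i ≤ k)).val = Jint i from rfl, Jint_snd] at this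
        exact this.symm
      rw [hbt] at h2
      have : j ≤ i := by exact_mod_cast h2
      omega
  intro i hi j hj hFeq
  rcases lt_trichotomy i j with hlt | heq | hlt
  · exact absurd hFeq (key i j hlt hj)
  · exact heq
  · exact absurd hFeq.symm (key j i hlt hi)

end Aux

/-- Let `G` be the connected strongly interval graph on the vertex set
`{J_0,…,J_k} ∪ {I_1,…,I_r}` and, for `0 ≤ i ≤ k-1`, let
`F_i = {J_i, J_{i+1}} ∪ {I_t : i ∈ I_t}`.  Then the maximal cliques of `G` are exactly
`F_0, F_1, …, F_{k-1}`; in particular `c(G) = k`. -/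
theorem maximalCliques_of_stronglyInterval (k r : ℕ) (a : Fin r → ℕ) (b : Fin r → ℝ)
    (h : StronglyIntervalData k r a b) :
    {s : Set (stronglyIntervalVerts k r a b) |
        Maximal (fun t => (intervalGraph (stronglyIntervalVerts k r a b)).IsClique t) s} =
      Fclique k r a b '' {i | i < k} ∧
    numMaximalCliques (intervalGraph (stronglyIntervalVerts k r a b)) = k := by
  have hset : {s : Set (stronglyIntervalVerts k r a b) |
        Maximal (fun t => (intervalGraph (stronglyIntervalVerts k r a b)).IsClique t) s} =
      Fclique k r a b '' {i | i < k} := by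
    ext s
    constructor
    · intro hs
      obtain ⟨i, hik, hsF⟩ := maximal_eq_F h hs
      exact ⟨i, hik, hsF.symm⟩
    · rintro ⟨i, hik, rfl⟩
      exact F_maximal h hik
  refine ⟨hset, ?_⟩
  rw [numMaximalCliques, hset, Set.ncard_image_of_injOn (F_injOn h)]
  have : {i : ℕ | i < k} = ↑(Finset.range k) := by ext; simp
  rw [this, Set.ncard_coe_finset, Finset.card_range]
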